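/- Every point x in a polytope P ⊆ R^n can be written as x = λv + (1-λ)y where v is a vertex of P, y ∈ P, and λ ≥ 1/(n+1). -/

import Mathlib

open Set Pointwise Metric

/-- A polytope is the convex hull of finitely many points. -/
def IsPolytope {n : ℕ} (P : Set (EuclideanSpace ℝ (Fin n))) : Prop :=
  ∃ S : Finset (EuclideanSpace ℝ (Fin n)), P = convexHull ℝ (S : Set (EuclideanSpace ℝ (Fin n)))

theorem stmt_1 {n : ℕ} (P : Set (EuclideanSpace ℝ (Fin n))) (hP : IsPolytope P)
    (x : EuclideanSpace ℝ (Fin n)) (hx : x ∈ P) :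
    ∃ (l : ℝ) (v y : EuclideanSpace ℝ (Fin n)),
      v ∈ P.extremePoints ℝ ∧ y ∈ P ∧ (1 : ℝ) / ((n : ℝ) + 1) ≤ l ∧
        x = l • v + (1 - l) • y := by
  classical
  obtain ⟨S, rfl⟩ := hP
  set P := convexHull ℝ (S : Set (EuclideanSpace ℝ (Fin n))) with hPdef
  set E := P.extremePoints ℝ with hEdef
  have hEsub : E ⊆ (S : Set (EuclideanSpace ℝ (Fin n))) := extremePoints_convexHull_subset
  have hEfin : E.Finite := S.finite_toSet.subset hEsub
  have hPcomp : IsCompact P := S.finite_toSet.isCompact_convexHull ℝ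
  have hPconv : Convex ℝ P := convex_convexHull ℝ _
  have hE : convexHull ℝ E = P := by
    have h1 : closure (convexHull ℝ E) = P :=
      closure_convexHull_extremePoints hPcomp hPconv
    rw [← h1, (hEfin.isCompact_convexHull ℝ).isClosed.closure_eq]
  -- Carathéodory on E
  have hx' : x ∈ convexHull ℝ E := by rw [hE]; exact hx
  rw [convexHull_eq_union] at hx'
  simp only [Set.mem_iUnion] at hx'
  obtain ⟨t, htE, htai, hxt⟩ := hx'
  -- card bound
  have hcard : (t.card : ℝ) ≤ (n : ℝ) + 1 := by
    have := htai.card_le_finrank_succ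
    have hdim : Module.finrank ℝ (vectorSpan ℝ (Set.range ((↑) : t → EuclideanSpace ℝ (Fin n))))
        ≤ n := by
      calc Module.finrank ℝ (vectorSpan ℝ (Set.range ((↑) : t → EuclideanSpace ℝ (Fin n))))
          ≤ Module.finrank ℝ (EuclideanSpace ℝ (Fin n)) := Submodule.finrank_le _
        _ = n := by simp
    have : Fintype.card t ≤ n + 1 := this.trans (by omega)
    rw [Fintype.card_coe] at this
    exact_mod_cast this
  obtain ⟨w, hw0, hw1, hwx⟩ := Finset.mem_convexHull.mp hxt
  have htne : t.Nonempty := by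
    rcases Finset.eq_empty_or_nonempty t with h | h
    · exfalso; rw [h] at hw1; simp at hw1
    · exact h
  have htcardpos : (0 : ℝ) < t.card := by exact_mod_cast htne.card_pos
  -- pigeonhole
  obtain ⟨v, hvt, hv⟩ : ∃ v ∈ t, ((t.card : ℝ))⁻¹ ≤ w v := by
    apply Finset.exists_le_of_sum_le htne
    rw [hw1, Finset.sum_const, nsmul_eq_mul, mul_inv_cancel₀ (ne_of_gt htcardpos)]
  have hvE : v ∈ E := htE hvt
  have hlbound : (1 : ℝ) / ((n : ℝ) + 1) ≤ w v := by
    refine le_trans ?_ hv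
    rw [one_div]
    exact inv_anti₀ htcardpos hcard
  have hwv1 : w v ≤ 1 := by
    rw [← hw1]
    exact Finset.single_le_sum (fun i hi => hw0 i hi) hvt
  have hxsum : x = ∑ i ∈ t, w i • i := by
    rw [← hwx, Finset.centerMass_eq_of_sum_1 _ _ hw1]; rfl
  have hsplit : x = w v • v + ∑ i ∈ t.erase v, w i • i := by
    rw [hxsum, ← Finset.add_sum_erase _ _ hvt]
  have hsumerase : ∑ i ∈ t.erase v, w i = 1 - w v := by
    have := Finset.add_sum_erase t w hvt
    rw [hw1] at this; linarith
  rcases eq_or_lt_of_le hwv1 with heq | hlt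
  · -- w v = 1 : all other weights vanish, x = v
    have hz : ∀ i ∈ t.erase v, w i = 0 := by
      intro i hi
      have hnn : ∀ j ∈ t.erase v, 0 ≤ w j := fun j hj => hw0 j (Finset.mem_of_mem_erase hj)
      have : ∑ j ∈ t.erase v, w j = 0 := by rw [hsumerase, ← heq]; ring
      exact (Finset.sum_eq_zero_iff_of_nonneg hnn).mp this i hi
    have hxv : x = v := by
      rw [hsplit, Finset.sum_eq_zero (fun i hi => by rw [hz i hi, zero_smul]), heq]
      simp
    refine ⟨1, v, v, hvE, extremePoints_subset hvE, ?_, ?_⟩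
    · rw [div_le_one (by positivity)]; linarith [(Nat.cast_nonneg n : (0:ℝ) ≤ n)]
    · rw [hxv]; simp
  · -- w v < 1
    set s : ℝ := 1 - w v with hs
    have hspos : 0 < s := by simp [hs]; linarith
    set y := (t.erase v).centerMass w id with hy
    have hyP : y ∈ P := by
      have : y ∈ convexHull ℝ ((t.erase v : Set (EuclideanSpace ℝ (Fin n)))) := by
        apply Finset.centerMass_mem_convexHull
        · exact fun i hi => hw0 i (Finset.mem_of_mem_erase hi)
        · rw [hsumerase]; exact hspos
        · exact fun i hi => Finset.mem_coe.mpr hi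
      have hsub : convexHull ℝ ((t.erase v : Set (EuclideanSpace ℝ (Fin n)))) ⊆ P := by
        rw [← hE]
        apply convexHull_mono
        exact fun i hi => htE (Finset.mem_of_mem_erase hi)
      exact hsub this
    refine ⟨w v, v, y, hvE, hyP, hlbound, ?_⟩
    have hys : s • y = ∑ i ∈ t.erase v, w i • i := by
      rw [hy, Finset.centerMass, hsumerase, smul_inv_smul₀ (ne_of_gt hspos)]
      rfl
    rw [hsplit, ← hs, hys]
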